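/- Let Z be a p×p complex Hermitian positive semidefinite matrix whose real part Q = Re Z is positive definite, and let U = Im Z. Then every eigenvalue of the matrix iQ⁻¹U lies in the closed interval [−1, 1]; in particular the largest eigenvalue R of iQ⁻¹U satisfies 0 ≤ R ≤ 1. -/

import Mathlib

open Matrix Polynomial
open scoped ComplexOrder

section AuxAI
open Finset

lemma qpos {p : ℕ} {Q : Matrix (Fin p) (Fin p) ℝ} (hQ : Q.PosDef) (v : Fin p → ℂ)
    (hv : v ≠ 0) :
    ∃ r : ℝ, 0 < r ∧ star v ⬝ᵥ ((Q.map Complex.ofReal) *ᵥ v) = (r : ℂ) := by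
  set x : Fin p → ℝ := fun a => (v a).re with hx
  set y : Fin p → ℝ := fun a => (v a).im with hy
  have hsym : ∀ a b, Q b a = Q a b := by
    intro a b
    have := congrFun (congrFun hQ.1 a) b
    simpa [Matrix.conjTranspose_apply] using this
  refine ⟨x ⬝ᵥ (Q *ᵥ x) + y ⬝ᵥ (Q *ᵥ y), ?_, ?_⟩
  · -- positivity
    have hxy : x ≠ 0 ∨ y ≠ 0 := by
      by_contra hc
      push_neg at hc
      apply hv
      funext a
      have h1 := congrFun hc.1 a
      have h2 := congrFun hc.2 a
      simp only [hx, hy, Pi.zero_apply] at h1 h2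
      exact Complex.ext h1 h2
    have hxn : 0 ≤ x ⬝ᵥ (Q *ᵥ x) := by simpa using hQ.posSemidef.dotProduct_mulVec_nonneg x
    have hyn : 0 ≤ y ⬝ᵥ (Q *ᵥ y) := by simpa using hQ.posSemidef.dotProduct_mulVec_nonneg y
    rcases hxy with h | h
    · have := hQ.dotProduct_mulVec_pos h; simp only [star_trivial] at this; linarith
    · have := hQ.dotProduct_mulVec_pos h; simp only [star_trivial] at this; linarith
  · -- value
    have lhs : star v ⬝ᵥ ((Q.map Complex.ofReal) *ᵥ v)
        = ∑ a, ∑ b, ((Q a b : ℂ) * ((starRingEnd ℂ) (v a) * v b)) := by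
      simp only [dotProduct, mulVec, Matrix.map_apply, Pi.star_apply, RCLike.star_def,
        Finset.mul_sum]
      refine Finset.sum_congr rfl fun a _ => Finset.sum_congr rfl fun b _ => by ring
    have hre : x ⬝ᵥ (Q *ᵥ x) + y ⬝ᵥ (Q *ᵥ y)
        = ∑ a, ∑ b, Q a b * (x a * x b + y a * y b) := by
      simp only [dotProduct, mulVec, Finset.mul_sum]
      rw [← Finset.sum_add_distrib]
      refine Finset.sum_congr rfl fun a _ => ?_
      rw [← Finset.sum_add_distrib]
      exact Finset.sum_congr rfl fun b _ => by ring
    have hanti : ∑ a, ∑ b, Q a b * (x a * y b - y a * x b) = 0 := by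
      have hcomm : ∑ a, ∑ b, Q a b * (x a * y b - y a * x b)
          = ∑ a, ∑ b, Q b a * (x b * y a - y b * x a) := Finset.sum_comm
      have hneg : ∑ a, ∑ b, Q b a * (x b * y a - y b * x a)
          = -∑ a, ∑ b, Q a b * (x a * y b - y a * x b) := by
        rw [← Finset.sum_neg_distrib]
        refine Finset.sum_congr rfl fun a _ => ?_
        rw [← Finset.sum_neg_distrib]
        refine Finset.sum_congr rfl fun b _ => ?_
        rw [hsym a b]; ring
      have := hcomm.trans hneg
      linarith
    rw [lhs]
    apply Complex.ext
    · rw [Complex.ofReal_re, hre, Complex.re_sum]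
      refine Finset.sum_congr rfl fun a _ => ?_
      rw [Complex.re_sum]
      refine Finset.sum_congr rfl fun b _ => ?_
      simp only [Complex.mul_re, Complex.mul_im, Complex.ofReal_re, Complex.ofReal_im,
        Complex.conj_re, Complex.conj_im, hx, hy]
      ring
    · rw [Complex.ofReal_im, ← hanti, Complex.im_sum]
      refine Finset.sum_congr rfl fun a _ => ?_
      rw [Complex.im_sum]
      refine Finset.sum_congr rfl fun b _ => ?_
      simp only [Complex.mul_re, Complex.mul_im, Complex.ofReal_re, Complex.ofReal_im,
        Complex.conj_re, Complex.conj_im, hx, hy]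
      ring

lemma eig_exists {p : ℕ} {M : Matrix (Fin p) (Fin p) ℂ} {z : ℂ}
    (h : M.charpoly.IsRoot z) : ∃ v : Fin p → ℂ, v ≠ 0 ∧ M *ᵥ v = z • v := by
  have hdet : ((z • 1 - M) : Matrix (Fin p) (Fin p) ℂ).det = 0 := by
    have h2 := h
    rw [Polynomial.IsRoot, Matrix.charpoly, ← Polynomial.coe_evalRingHom,
      RingHom.map_det] at h2
    have hmat : (Polynomial.evalRingHom z).mapMatrix M.charmatrix = z • 1 - M := by
      ext i j
      by_cases hij : i = j
      · subst hij
        simp [Matrix.charmatrix_apply_eq, Matrix.one_apply]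
      · simp [Matrix.charmatrix_apply_ne _ _ _ hij, Matrix.one_apply, hij]
    rwa [hmat] at h2
  obtain ⟨v, hv, hmv⟩ := (Matrix.exists_mulVec_eq_zero_iff).2 hdet
  refine ⟨v, hv, ?_⟩
  rw [sub_mulVec, sub_eq_zero] at hmv
  rw [← hmv, smul_mulVec, one_mulVec]

lemma root_bound {p : ℕ} {Q U : Matrix (Fin p) (Fin p) ℝ} {Z : Matrix (Fin p) (Fin p) ℂ}
    (hQ : Q.PosDef) (hZ : Z.PosSemidef)
    (hdec : Z = Q.map Complex.ofReal + Complex.I • U.map Complex.ofReal)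
    {z : ℂ}
    (hv' : ∃ v : Fin p → ℂ, v ≠ 0 ∧
      (Complex.I • ((Q⁻¹ * U).map Complex.ofReal)) *ᵥ v = z • v) :
    z.im = 0 ∧ -1 ≤ z.re ∧ z.re ≤ 1 := by
  obtain ⟨v, hv, heig⟩ := hv'
  obtain ⟨r, hr, hq⟩ := qpos hQ v hv
  have hQsym : ∀ a b, Q b a = Q a b := fun a b => by
    have := congrFun (congrFun hQ.1 a) b
    simpa [Matrix.conjTranspose_apply] using this
  -- multiply eigen equation by Q
  have hdet : IsUnit Q.det := isUnit_iff_ne_zero.mpr hQ.det_pos.ne'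
  have hmul : (Q.map Complex.ofReal) * ((Q⁻¹ * U).map Complex.ofReal)
      = U.map Complex.ofReal := by
    have h1 : (Q * (Q⁻¹ * U)).map (Complex.ofRealHom : ℝ →+* ℂ)
        = Q.map Complex.ofRealHom * ((Q⁻¹ * U).map Complex.ofRealHom) :=
      Matrix.map_mul
    have h2 : Q * (Q⁻¹ * U) = U := by
      rw [← mul_assoc, Matrix.mul_nonsing_inv _ hdet, one_mul]
    rw [h2] at h1
    exact h1.symm
  have h3 : Complex.I • ((U.map Complex.ofReal) *ᵥ v)
      = z • ((Q.map Complex.ofReal) *ᵥ v) := by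
    have e1 : (U.map Complex.ofReal) *ᵥ v
        = (Q.map Complex.ofReal) *ᵥ (((Q⁻¹ * U).map Complex.ofReal) *ᵥ v) := by
      rw [Matrix.mulVec_mulVec, hmul]
    rw [e1, ← Matrix.mulVec_smul, ← smul_mulVec, heig, Matrix.mulVec_smul]
  set u : ℂ := star v ⬝ᵥ ((U.map Complex.ofReal) *ᵥ v) with hu
  have h4 : Complex.I * u = z * (r : ℂ) := by
    have := congrArg (fun w => star v ⬝ᵥ w) h3
    simpa [dotProduct_smul, hq, smul_eq_mul] using this
  have hplus : 0 ≤ (r : ℂ) + Complex.I * u := by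
    have h0 := hZ.dotProduct_mulVec_nonneg v
    rw [hdec, Matrix.add_mulVec, dotProduct_add, smul_mulVec,
      dotProduct_smul, hq, smul_eq_mul] at h0
    exact h0
  have hminus : 0 ≤ (r : ℂ) - Complex.I * u := by
    have hU : ∀ a b, U b a = - U a b := by
      intro a b
      have h := congrFun (congrFun hZ.1 a) b
      rw [Matrix.conjTranspose_apply, hdec] at h
      have h2 := congrArg Complex.im h
      simp at h2
      linarith
    have hdecT : Zᵀ = Q.map Complex.ofReal - Complex.I • U.map Complex.ofReal := by
      ext a b
      rw [Matrix.transpose_apply, hdec]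
      simp only [Matrix.add_apply, Matrix.sub_apply, Matrix.smul_apply, Matrix.map_apply,
        smul_eq_mul, hQsym a b, hU a b]
      push_cast
      ring
    have h0 := hZ.transpose.dotProduct_mulVec_nonneg v
    rw [hdecT, Matrix.sub_mulVec, dotProduct_sub, smul_mulVec,
      dotProduct_smul, hq, smul_eq_mul] at h0
    exact h0
  -- extract real/imag information
  rw [Complex.nonneg_iff] at hplus hminus
  have hsim : (Complex.I * u).im = 0 := by
    have := hplus.2
    simp only [Complex.add_im, Complex.ofReal_im, zero_add] at this
    linarith [this]
  have hsre1 : -r ≤ (Complex.I * u).re := by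
    have := hplus.1
    simp only [Complex.add_re, Complex.ofReal_re] at this
    linarith
  have hsre2 : (Complex.I * u).re ≤ r := by
    have := hminus.1
    simp only [Complex.sub_re, Complex.ofReal_re] at this
    linarith
  have hre : (Complex.I * u).re = z.re * r := by
    rw [h4]; simp [Complex.mul_re]
  have him : z.im * r = 0 := by
    have : (Complex.I * u).im = z.im * r := by rw [h4]; simp [Complex.mul_im]
    linarith [this, hsim]
  have hzim : z.im = 0 := by
    rcases mul_eq_zero.mp him with h | h
    · exact h
    · exact absurd h hr.ne'
  refine ⟨hzim, ?_, ?_⟩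
  · nlinarith [hsre1, hre]
  · nlinarith [hsre2, hre]
end AuxAI

/-- The matrix `i (Re Z)⁻¹ (Im Z)` associated to a Hermitian positive semidefinite matrix
`Z` (with `Re Z` positive definite). -/
noncomputable def AImat (p : ℕ) (Z : Matrix (Fin p) (Fin p) ℂ) :
    Matrix (Fin p) (Fin p) ℂ :=
  Complex.I •
    (((Matrix.of fun a b => (Z a b).re : Matrix (Fin p) (Fin p) ℝ))⁻¹
      * (Matrix.of fun a b => (Z a b).im)).map Complex.ofReal

/-- For `Z` Hermitian positive semidefinite with positive definite real part `Q = Re Z`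
and `U = Im Z`, every eigenvalue of `iQ⁻¹U` is real and lies in `[−1, 1]`; in particular
the largest eigenvalue `R` satisfies `0 ≤ R ≤ 1`. -/
theorem stmt7 (p : ℕ) (Z : Matrix (Fin p) (Fin p) ℂ) (hZ : Z.PosSemidef)
    (hQ : (Matrix.of fun a b => (Z a b).re : Matrix (Fin p) (Fin p) ℝ).PosDef) :
    (∀ z ∈ ((AImat p Z).charpoly).roots, z.im = 0 ∧ -1 ≤ z.re ∧ z.re ≤ 1) ∧
    (∀ R : ℝ, (R : ℂ) ∈ ((AImat p Z).charpoly).roots →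
      (∀ z ∈ ((AImat p Z).charpoly).roots, z.re ≤ R) → 0 ≤ R ∧ R ≤ 1) := by
  set Q : Matrix (Fin p) (Fin p) ℝ := Matrix.of fun a b => (Z a b).re with hQdef
  set U : Matrix (Fin p) (Fin p) ℝ := Matrix.of fun a b => (Z a b).im with hUdef
  have hdec : Z = Q.map Complex.ofReal + Complex.I • U.map Complex.ofReal := by
    ext a b
    simp only [Matrix.add_apply, Matrix.smul_apply, Matrix.map_apply, smul_eq_mul,
      hQdef, hUdef, Matrix.of_apply]
    rw [mul_comm]
    exact (Complex.re_add_im _).symm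
  have hA : AImat p Z = Complex.I • ((Q⁻¹ * U).map Complex.ofReal) := rfl
  have part1 : ∀ z ∈ ((AImat p Z).charpoly).roots, z.im = 0 ∧ -1 ≤ z.re ∧ z.re ≤ 1 := by
    intro z hz
    have hroot : (AImat p Z).charpoly.IsRoot z := Polynomial.isRoot_of_mem_roots hz
    rw [hA] at hroot
    exact root_bound hQ hZ hdec (eig_exists hroot)
  refine ⟨part1, fun R hR hmax => ⟨?_, ?_⟩⟩
  · -- trace is zero, so the largest root is nonnegative
    have hQsym : Qᵀ = Q := by
      ext a b
      have := congrFun (congrFun hQ.1 a) b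
      simpa [Matrix.conjTranspose_apply] using this
    have hUanti : Uᵀ = -U := by
      ext a b
      have h := congrFun (congrFun hZ.1 a) b
      rw [Matrix.conjTranspose_apply] at h
      have h2 := congrArg Complex.im h
      simp only [Matrix.transpose_apply, Matrix.neg_apply, hUdef, Matrix.of_apply]
      simp at h2
      linarith
    have htr0 : (Q⁻¹ * U).trace = 0 := by
      have e1 : (Q⁻¹ * U).trace = ((Q⁻¹ * U)ᵀ).trace := (Matrix.trace_transpose _).symm
      rw [Matrix.transpose_mul, Matrix.transpose_nonsing_inv, hQsym, hUanti,
        Matrix.neg_mul, Matrix.trace_neg, Matrix.trace_mul_comm] at e1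
      have e2 : (Q⁻¹ * U).trace = (U * Q⁻¹).trace := Matrix.trace_mul_comm _ _
      linarith
    have htr : (AImat p Z).trace = 0 := by
      rw [hA, Matrix.trace_smul]
      have : ((Q⁻¹ * U).map Complex.ofReal).trace = ((Q⁻¹ * U).trace : ℂ) := by
        simp [Matrix.trace, Matrix.diag, Matrix.map_apply]
      rw [this, htr0]
      simp
    have hsum : ((AImat p Z).charpoly).roots.sum = 0 := by
      rw [← Matrix.trace_eq_sum_roots_charpoly, htr]
    have hsumre : (((AImat p Z).charpoly).roots.map Complex.re).sum = 0 := by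
      have := map_multiset_sum Complex.reAddGroupHom ((AImat p Z).charpoly).roots
      rw [hsum] at this
      simpa [Complex.coe_reAddGroupHom] using this.symm
    have hle := Multiset.sum_le_card_nsmul (((AImat p Z).charpoly).roots.map Complex.re) R
      (by
        intro x hx
        obtain ⟨w, hw, rfl⟩ := Multiset.mem_map.mp hx
        exact hmax w hw)
    rw [hsumre, Multiset.card_map] at hle
    have hcard : 0 < Multiset.card ((AImat p Z).charpoly).roots :=
      Multiset.card_pos_iff_exists_mem.mpr ⟨_, hR⟩
    by_contra hRneg
    push_neg at hRneg
    have : (Multiset.card ((AImat p Z).charpoly).roots : ℝ) * R < 0 :=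
      mul_neg_of_pos_of_neg (by exact_mod_cast hcard) hRneg
    rw [nsmul_eq_mul] at hle
    linarith
  · have h := part1 (R : ℂ) hR
    simpa using h.2.2
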